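/- Let A and M be symmetric positive definite real 3×3 matrices that commute (AM = MA). Then for every real orthogonal 3×3 matrix Q one has ‖A − M‖_F ≤ ‖A − QM‖_F, where ‖·‖_F is the Frobenius norm. -/

import Mathlib

open Matrix

attribute [local instance] Matrix.frobeniusNormedAddCommGroup
noncomputable def Matrix.PosSemidef.sqrt {n : Type*} [Fintype n] [DecidableEq n]
    {A : Matrix n n ℝ} (hA : A.PosSemidef) : Matrix n n ℝ :=
  (hA.1.eigenvectorUnitary : Matrix n n ℝ) * diagonal (RCLike.ofReal ∘ Real.sqrt ∘ hA.1.eigenvalues)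
    * star (hA.1.eigenvectorUnitary : Matrix n n ℝ)

lemma Matrix.PosSemidef.sqrt_mul_self {n : Type*} [Fintype n] [DecidableEq n]
    {A : Matrix n n ℝ} (hA : A.PosSemidef) : hA.sqrt * hA.sqrt = A := by
  have hU1 := Unitary.coe_star_mul_self hA.1.eigenvectorUnitary
  have hspec : A = (hA.1.eigenvectorUnitary : Matrix n n ℝ) * diagonal (RCLike.ofReal ∘ hA.1.eigenvalues)
      * star (hA.1.eigenvectorUnitary : Matrix n n ℝ) := by
    simpa using hA.1.spectral_theorem
  conv_rhs => rw [hspec]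
  simp only [Matrix.PosSemidef.sqrt, Matrix.mul_assoc]
  rw [← Matrix.mul_assoc (star _) (_ : Matrix n n ℝ) (_ * _), hU1, Matrix.one_mul, ← Matrix.mul_assoc (diagonal _),
    diagonal_mul_diagonal]
  congr 3
  funext i
  simp [Real.mul_self_sqrt (hA.eigenvalues_nonneg i)]

lemma Matrix.PosSemidef.sqrt_isHermitian {n : Type*} [Fintype n] [DecidableEq n]
    {A : Matrix n n ℝ} (hA : A.PosSemidef) : hA.sqrt.IsHermitian := by
  simp only [Matrix.IsHermitian, Matrix.PosSemidef.sqrt, conjTranspose_mul, diagonal_conjTranspose,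
    Matrix.mul_assoc]
  simp only [Matrix.star_eq_conjTranspose, conjTranspose_conjTranspose, star_trivial]

lemma diag_commute_aux {n : Type*} [Fintype n] [DecidableEq n]
    {d f : n → ℝ} (hf : ∀ i j, d i = d j → f i = f j)
    (C : Matrix n n ℝ) (h : C * diagonal d = diagonal d * C) :
    C * diagonal f = diagonal f * C := by
  ext i j
  have h' : C i j * d j = d i * C i j := by
    have := congrFun (congrFun h i) j
    simpa [Matrix.mul_diagonal, Matrix.diagonal_mul] using this
  by_cases hC : C i j = 0
  · simp [Matrix.mul_diagonal, Matrix.diagonal_mul, hC]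
  · have hd : d j = d i := mul_left_cancel₀ hC (by linarith)
    simp [Matrix.mul_diagonal, Matrix.diagonal_mul, hf j i hd, mul_comm]

lemma commute_sqrt {n : Type*} [Fintype n] [DecidableEq n]
    {A B : Matrix n n ℝ} (hA : A.PosSemidef) (h : B * A = A * B) :
    B * hA.sqrt = hA.sqrt * B := by
  set U : Matrix n n ℝ := (hA.1.eigenvectorUnitary : Matrix n n ℝ) with hU
  have hU1 : star U * U = 1 := Unitary.coe_star_mul_self hA.1.eigenvectorUnitary
  have hU2 : U * star U = 1 := Unitary.coe_mul_star_self hA.1.eigenvectorUnitary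
  have hspec : A = U * diagonal (RCLike.ofReal ∘ hA.1.eigenvalues) * star U := by
    simpa using hA.1.spectral_theorem
  set C : Matrix n n ℝ := star U * B * U with hC
  have hCD : C * diagonal (RCLike.ofReal ∘ hA.1.eigenvalues)
      = diagonal (RCLike.ofReal ∘ hA.1.eigenvalues) * C := by
    have h2 : B * (U * diagonal (RCLike.ofReal ∘ hA.1.eigenvalues) * star U)
        = (U * diagonal (RCLike.ofReal ∘ hA.1.eigenvalues) * star U) * B := by
      rw [← hspec]; exact h
    calc C * diagonal (RCLike.ofReal ∘ hA.1.eigenvalues)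
        = star U * (B * (U * diagonal (RCLike.ofReal ∘ hA.1.eigenvalues) * star U)) * U := by
          simp only [hC, Matrix.mul_assoc, hU1, Matrix.mul_one]
      _ = star U * ((U * diagonal (RCLike.ofReal ∘ hA.1.eigenvalues) * star U) * B) * U := by
          rw [h2]
      _ = diagonal (RCLike.ofReal ∘ hA.1.eigenvalues) * C := by
          simp only [hC, ← Matrix.mul_assoc]
          rw [hU1]
          simp [Matrix.mul_assoc]
  have hCD' : C * diagonal (RCLike.ofReal ∘ Real.sqrt ∘ hA.1.eigenvalues)
      = diagonal (RCLike.ofReal ∘ Real.sqrt ∘ hA.1.eigenvalues) * C := by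
    apply diag_commute_aux (d := RCLike.ofReal ∘ hA.1.eigenvalues)
    · intro i j hij
      simp only [Function.comp_apply] at hij ⊢
      norm_cast at hij ⊢
      rw [hij]
    · exact hCD
  have hsq : hA.sqrt = U * diagonal (RCLike.ofReal ∘ Real.sqrt ∘ hA.1.eigenvalues) * star U := rfl
  rw [hsq]
  calc B * (U * diagonal (RCLike.ofReal ∘ Real.sqrt ∘ hA.1.eigenvalues) * star U)
      = U * (C * diagonal (RCLike.ofReal ∘ Real.sqrt ∘ hA.1.eigenvalues)) * star U := by
        simp only [hC, ← Matrix.mul_assoc]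
        rw [hU2]
        simp [Matrix.mul_assoc]
    _ = U * (diagonal (RCLike.ofReal ∘ Real.sqrt ∘ hA.1.eigenvalues) * C) * star U := by rw [hCD']
    _ = U * diagonal (RCLike.ofReal ∘ Real.sqrt ∘ hA.1.eigenvalues) * star U * B := by
        simp only [hC, Matrix.mul_assoc, hU2, Matrix.mul_one]

lemma norm_sq_eq_trace (X : Matrix (Fin 3) (Fin 3) ℝ) :
    ‖X‖ ^ 2 = Matrix.trace (Xᵀ * X) := by
  rw [Matrix.frobenius_norm_def, ← Real.rpow_natCast _ 2, ← Real.rpow_mul (by positivity)]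
  norm_num
  rw [Matrix.trace]
  simp only [Matrix.diag_apply, Matrix.mul_apply, Matrix.transpose_apply]
  rw [Finset.sum_comm]
  apply Finset.sum_congr rfl
  intro i _
  apply Finset.sum_congr rfl
  intro j _
  ring

lemma trace_tt_nonneg (X : Matrix (Fin 3) (Fin 3) ℝ) :
    0 ≤ Matrix.trace (Xᵀ * X) := by
  rw [Matrix.trace]
  simp only [Matrix.diag_apply, Matrix.mul_apply, Matrix.transpose_apply]
  apply Finset.sum_nonneg
  intro i _
  apply Finset.sum_nonneg
  intro j _
  exact mul_self_nonneg _

lemma trace_Q_psd_le {S Q : Matrix (Fin 3) (Fin 3) ℝ} (hS : S.PosSemidef)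
    (hQ : Qᵀ * Q = 1) : Matrix.trace (Q * S) ≤ Matrix.trace S := by
  set W := hS.sqrt with hW
  have hWW : W * W = S := hS.sqrt_mul_self
  have hWsym : Wᵀ = W := by
    rw [← Matrix.conjTranspose_eq_transpose_of_trivial]
    exact hS.sqrt_isHermitian
  have key := trace_tt_nonneg (Q * W - W)
  have expand : Matrix.trace ((Q * W - W)ᵀ * (Q * W - W))
      = 2 * Matrix.trace S - 2 * Matrix.trace (Q * S) := by
    have e1 : Matrix.trace ((Q * W)ᵀ * (Q * W)) = Matrix.trace S := by
      rw [Matrix.transpose_mul, Matrix.mul_assoc, ← Matrix.mul_assoc Qᵀ Q W, hQ,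
        Matrix.one_mul, hWsym, hWW]
    have e2 : Matrix.trace (Wᵀ * (Q * W)) = Matrix.trace (Q * S) := by
      rw [hWsym, Matrix.trace_mul_comm W (Q * W), Matrix.mul_assoc, hWW]
    have e3 : Matrix.trace ((Q * W)ᵀ * W) = Matrix.trace (Q * S) := by
      rw [← Matrix.trace_transpose ((Q * W)ᵀ * W), Matrix.transpose_mul,
        Matrix.transpose_transpose, e2]
    have e4 : Matrix.trace (Wᵀ * W) = Matrix.trace S := by rw [hWsym, hWW]
    simp only [Matrix.transpose_sub, Matrix.sub_mul, Matrix.mul_sub, Matrix.trace_sub]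
    rw [e1, e2, e3, e4]
    ring
  rw [expand] at key
  linarith

/-- **Lemma 14 of the paper.** If `A` and `M` are commuting symmetric positive definite
real `3×3` matrices and `Q` is orthogonal, then `‖A − M‖_F ≤ ‖A − Q·M‖_F`
(Frobenius norm). -/
theorem stmt1 (A M Q : Matrix (Fin 3) (Fin 3) ℝ)
    (hA : A.PosDef) (hM : M.PosDef) (hcomm : A * M = M * A)
    (hQ : Qᵀ * Q = 1) :
    ‖A - M‖ ≤ ‖A - Q * M‖ := by
  have hAt : Aᵀ = A := by
    rw [← Matrix.conjTranspose_eq_transpose_of_trivial]; exact hA.1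
  have hMt : Mᵀ = M := by
    rw [← Matrix.conjTranspose_eq_transpose_of_trivial]; exact hM.1
  -- `M * A` is positive semidefinite
  set R := hA.posSemidef.sqrt with hR
  have hRR : R * R = A := hA.posSemidef.sqrt_mul_self
  have hRsym : Rᵀ = R := by
    rw [← Matrix.conjTranspose_eq_transpose_of_trivial]
    exact hA.posSemidef.sqrt_isHermitian
  have hMR : M * R = R * M := commute_sqrt hA.posSemidef hcomm.symm
  have hMA : M * A = Rᴴ * M * R := by
    rw [Matrix.conjTranspose_eq_transpose_of_trivial, hRsym, ← hRR,
      ← Matrix.mul_assoc, hMR, Matrix.mul_assoc]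
  have hSpsd : (M * A).PosSemidef := by
    rw [hMA]; exact hM.posSemidef.conjTranspose_mul_mul_same R
  -- the key trace inequality
  have key : Matrix.trace (Aᵀ * (Q * M)) ≤ Matrix.trace (Aᵀ * M) := by
    have h1 : Matrix.trace (Aᵀ * (Q * M)) = Matrix.trace (Q * (M * A)) := by
      rw [hAt, Matrix.trace_mul_comm, Matrix.mul_assoc]
    have h2 : Matrix.trace (Aᵀ * M) = Matrix.trace (M * A) := by
      rw [hAt, Matrix.trace_mul_comm]
    rw [h1, h2]
    exact trace_Q_psd_le hSpsd hQ
  -- compare squared norms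
  have hsq : ‖A - M‖ ^ 2 ≤ ‖A - Q * M‖ ^ 2 := by
    rw [norm_sq_eq_trace, norm_sq_eq_trace]
    have e2 : Matrix.trace ((Q * M)ᵀ * (Q * M)) = Matrix.trace (Mᵀ * M) := by
      rw [Matrix.transpose_mul, Matrix.mul_assoc, ← Matrix.mul_assoc Qᵀ Q M, hQ,
        Matrix.one_mul]
    have e3 : Matrix.trace (Mᵀ * A) = Matrix.trace (Aᵀ * M) := by
      rw [← Matrix.trace_transpose (Mᵀ * A), Matrix.transpose_mul,
        Matrix.transpose_transpose]
    have e4 : Matrix.trace ((Q * M)ᵀ * A) = Matrix.trace (Aᵀ * (Q * M)) := by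
      rw [← Matrix.trace_transpose ((Q * M)ᵀ * A), Matrix.transpose_mul,
        Matrix.transpose_transpose]
    simp only [Matrix.transpose_sub, Matrix.sub_mul, Matrix.mul_sub, Matrix.trace_sub]
    rw [e2, e3, e4]
    linarith
  have h0 : (0:ℝ) ≤ ‖A - Q * M‖ := norm_nonneg _
  nlinarith [norm_nonneg (A - M)]
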